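/- Let J be the ideal of Z[x_1,...,x_n] generated by h_{k+1}(x_1,...,x_n), h_{k+2}(x_1,...,x_n), ..., h_{k+i}(x_1,...,x_n) for some 1 <= i <= n. Then the polynomial h_{k+i}(x_i, x_{i+1},...,x_n) lies in J. -/

import Mathlib

/-- The complete homogeneous symmetric polynomial of degree `d` in the variables `x_i` for
`i ∈ S`: the sum of all monomials of degree `d` in those variables. -/
noncomputable def hIn (S : Finset ℕ) (d : ℕ) : MvPolynomial ℕ ℤ :=
  ∑ m ∈ S.sym d, (Multiset.map MvPolynomial.X (m : Multiset ℕ)).prod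

lemma sym_insert_eq (a : ℕ) (S : Finset ℕ) (d : ℕ) :
    (insert a S).sym (d + 1) =
      S.sym (d + 1) ∪ ((insert a S).sym d).image (Sym.cons a) := by
  ext m
  simp only [Finset.mem_union, Finset.mem_image, Finset.mem_sym_iff]
  constructor
  · intro h
    by_cases hm : a ∈ m
    · refine Or.inr ⟨m.erase a hm, fun b hb => ?_, Sym.cons_erase hm⟩
      have hbm : b ∈ m := by
        rw [← Sym.cons_erase hm]; exact Sym.mem_cons_of_mem hb
      exact h b hbm
    · exact Or.inl fun b hb => (Finset.mem_insert.1 (h b hb)).resolve_left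
        (fun e => hm (e ▸ hb))
  · rintro (h | ⟨m', hm', rfl⟩)
    · exact fun b hb => Finset.mem_insert_of_mem (h b hb)
    · intro b hb
      rcases Sym.mem_cons.1 hb with rfl | hb
      · exact Finset.mem_insert_self _ _
      · exact hm' b hb

lemma hIn_insert (a : ℕ) (S : Finset ℕ) (ha : a ∉ S) (d : ℕ) :
    hIn (insert a S) (d + 1) = hIn S (d + 1) + MvPolynomial.X a * hIn (insert a S) d := by
  rw [hIn, sym_insert_eq a S d, Finset.sum_union, Finset.sum_image]
  · rw [hIn, hIn, Finset.mul_sum]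
    congr 1
    refine Finset.sum_congr rfl fun m _ => ?_
    rw [Sym.coe_cons, Multiset.map_cons, Multiset.prod_cons]
  · intro x _ y _ hxy
    exact (Sym.cons_inj_right a x y).1 hxy
  · rw [Finset.disjoint_right]
    intro m hm hmem
    obtain ⟨m', hm', rfl⟩ := Finset.mem_image.1 hm
    rw [Finset.mem_sym_iff] at hmem
    exact ha (hmem a (Sym.mem_cons_self a m'))

lemma stmt14_main (n k : ℕ) : ∀ i, 1 ≤ i → i ≤ n → ∀ j, 1 ≤ j → j ≤ i →
    hIn (Finset.Icc j n) (k + i) ∈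
      Ideal.span ((fun j => hIn (Finset.Icc 1 n) (k + j)) '' Set.Icc 1 i) := by
  intro i
  induction i using Nat.strong_induction_on with
  | _ i IH =>
    intro hi1 hin j
    induction j with
    | zero => intro h; omega
    | succ j IHj =>
      intro hj1 hji
      rcases Nat.eq_zero_or_pos j with rfl | hj0
      · exact Ideal.subset_span ⟨i, ⟨hi1, le_refl i⟩, rfl⟩
      · -- j ≥ 1, j + 1 ≤ i
        have hIccins : Finset.Icc j n = insert j (Finset.Icc (j + 1) n) := by
          ext x
          simp only [Finset.mem_Icc, Finset.mem_insert]
          omega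
        have hnotmem : j ∉ Finset.Icc (j + 1) n := by
          simp only [Finset.mem_Icc]; omega
        have hd : k + i = (k + i - 1) + 1 := by omega
        have hrec := hIn_insert j (Finset.Icc (j + 1) n) hnotmem (k + i - 1)
        rw [← hIccins, ← hd] at hrec
        have heq : hIn (Finset.Icc (j + 1) n) (k + i) =
            hIn (Finset.Icc j n) (k + i)
              - MvPolynomial.X j * hIn (Finset.Icc j n) (k + i - 1) := by
          rw [hrec]; ring
        rw [heq]
        have h1 : hIn (Finset.Icc j n) (k + i) ∈
            Ideal.span ((fun j => hIn (Finset.Icc 1 n) (k + j)) '' Set.Icc 1 i) :=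
          IHj hj0 (by omega)
        have h2 : hIn (Finset.Icc j n) (k + i - 1) ∈
            Ideal.span ((fun j => hIn (Finset.Icc 1 n) (k + j)) '' Set.Icc 1 i) := by
          have hd2 : k + i - 1 = k + (i - 1) := by omega
          rw [hd2]
          refine Ideal.span_mono (Set.image_mono ?_)
            (IH (i - 1) (by omega) (by omega) (by omega) j hj0 (by omega))
          exact Set.Icc_subset_Icc_right (by omega)
        exact Ideal.sub_mem _ h1 (Ideal.mul_mem_left _ _ h2)

/-- If `J` is the ideal of `ℤ[x₁, …, x_n]` generated by
`h_{k+1}(x₁,…,x_n), …, h_{k+i}(x₁,…,x_n)`, then `h_{k+i}(x_i, x_{i+1}, …, x_n) ∈ J`. -/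
theorem stmt14 (n k i : ℕ) (hk : 0 < k) (hi : 1 ≤ i) (hin : i ≤ n) :
    hIn (Finset.Icc i n) (k + i) ∈
      Ideal.span ((fun j => hIn (Finset.Icc 1 n) (k + j)) '' Set.Icc 1 i) :=
  stmt14_main n k i hi hin i hi (le_refl i)
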